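/- Two discourse trees over m EDUs whose nodes carry the same set of interval labels are equal; that is, a discourse tree over m EDUs is uniquely determined by the set of intervals labeling its nodes. -/
import Mathlib


/-- A discourse tree over the EDU interval `(i, j)`: a full binary tree whose
nodes are labeled by intervals, leaves are labeled `(i, i+1)`, and every
internal node labeled `(i, j)` has two children labeled `(i, k)` and `(k, j)`
for some `i < k < j`.  A discourse tree over `m` EDUs is a `DTree 0 m`. -/
inductive DTree : ℕ → ℕ → Type
  | leaf (i : ℕ) : DTree i (i + 1)
  | node {i k j : ℕ} : DTree i k → DTree k j → DTree i j

/-- The set of intervals labeling the nodes of the tree. -/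
def DTree.labelSet : {i j : ℕ} → DTree i j → Finset (ℕ × ℕ)
  | _, _, DTree.leaf i => {(i, i + 1)}
  | _, _, @DTree.node i _ j l r => insert (i, j) (l.labelSet ∪ r.labelSet)

lemma DTree.lt : ∀ {i j : ℕ}, DTree i j → i < j
  | _, _, .leaf i => Nat.lt_succ_self i
  | _, _, .node l r => lt_trans l.lt r.lt

lemma DTree.self_mem : ∀ {i j : ℕ} (T : DTree i j), (i, j) ∈ T.labelSet
  | _, _, .leaf i => by simp [labelSet]
  | _, _, .node l r => by simp [labelSet]

lemma DTree.mem_bounds : ∀ {i j a b : ℕ} (T : DTree i j),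
    (a, b) ∈ T.labelSet → i ≤ a ∧ a < b ∧ b ≤ j
  | _, _, a, b, .leaf i, h => by
    simp only [labelSet, Finset.mem_singleton, Prod.mk.injEq] at h
    omega
  | _, _, a, b, @DTree.node i k j l r, h => by
    simp only [labelSet, Finset.mem_insert, Finset.mem_union, Prod.mk.injEq] at h
    have hl := l.lt
    have hr := r.lt
    rcases h with ⟨h1, h2⟩ | h | h
    · omega
    · have := l.mem_bounds h; omega
    · have := r.mem_bounds h; omega

lemma DTree.labelSet_inj : ∀ {i j : ℕ} (T₁ T₂ : DTree i j),
    T₁.labelSet = T₂.labelSet → T₁ = T₂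
  | _, _, .leaf i, T₂, h => by
    cases T₂ with
    | leaf => rfl
    | node l r => have := l.lt; have := r.lt; omega
  | _, _, @DTree.node i k j l r, T₂, h => by
    cases T₂ with
    | leaf i' => have := l.lt; have := r.lt; omega
    | @node _ k' _ l' r' =>
      have hk : k = k' := by
        have hkk' : k ≤ k' := by
          have hm : (i, k) ∈ (DTree.node l' r').labelSet := by
            rw [← h]
            simp only [labelSet, Finset.mem_insert, Finset.mem_union]
            exact Or.inr (Or.inl l.self_mem)
          simp only [labelSet, Finset.mem_insert, Finset.mem_union, Prod.mk.injEq] at hm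
          have hl' := l'.lt
          have hr' := r'.lt
          have hrlt := r.lt
          rcases hm with ⟨_, h2⟩ | hm | hm
          · omega
          · have := l'.mem_bounds hm; omega
          · have := r'.mem_bounds hm; omega
        have hk'k : k' ≤ k := by
          have hm : (i, k') ∈ (DTree.node l r).labelSet := by
            rw [h]
            simp only [labelSet, Finset.mem_insert, Finset.mem_union]
            exact Or.inr (Or.inl l'.self_mem)
          simp only [labelSet, Finset.mem_insert, Finset.mem_union, Prod.mk.injEq] at hm
          have hl := l.lt
          have hr := r.lt
          have hrlt' := r'.lt
          rcases hm with ⟨_, h2⟩ | hm | hm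
          · omega
          · have := l.mem_bounds hm; omega
          · have := r.mem_bounds hm; omega
        omega
      subst hk
      -- characterize left and right label sets as filters of the whole set
      have key : ∀ (L : DTree i k) (R : DTree k j) (x : ℕ × ℕ),
          (x ∈ L.labelSet ↔ x ∈ (DTree.node L R).labelSet ∧ x.2 ≤ k) ∧
          (x ∈ R.labelSet ↔ x ∈ (DTree.node L R).labelSet ∧ k ≤ x.1) := by
        intro L R x
        obtain ⟨a, b⟩ := x
        have hL := L.lt
        have hR := R.lt
        simp only [labelSet, Finset.mem_insert, Finset.mem_union, Prod.mk.injEq]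
        constructor
        · constructor
          · intro hx
            have := L.mem_bounds hx
            exact ⟨Or.inr (Or.inl hx), by omega⟩
          · rintro ⟨(⟨h1, h2⟩ | hx | hx), hb⟩
            · omega
            · exact hx
            · have := R.mem_bounds hx; omega
        · constructor
          · intro hx
            have := R.mem_bounds hx
            exact ⟨Or.inr (Or.inr hx), by omega⟩
          · rintro ⟨(⟨h1, h2⟩ | hx | hx), hb⟩
            · omega
            · have := L.mem_bounds hx; omega
            · exact hx
      have hl : l.labelSet = l'.labelSet := by
        ext x
        rw [(key l r x).1, (key l' r' x).1, h]
      have hr : r.labelSet = r'.labelSet := by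
        ext x
        rw [(key l r x).2, (key l' r' x).2, h]
      rw [l.labelSet_inj l' hl, r.labelSet_inj r' hr]

/-- Two discourse trees over `m` EDUs (`m ≥ 1`) whose nodes carry the same set
of interval labels are equal: a discourse tree is uniquely determined by the
set of intervals labeling its nodes. -/
theorem labelSet_injective (m : ℕ) (hm : 1 ≤ m) (T₁ T₂ : DTree 0 m)
    (h : T₁.labelSet = T₂.labelSet) : T₁ = T₂ :=
  T₁.labelSet_inj T₂ h
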